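/- Let f ∈ C(R,K) have the wavelet expansion f = ∑_{r∈ℛ} b_r(f) χ_r. Then f ∈ N^1(R,K) (i.e. f is a C^1-function with f' = 0) if and only if lim_{r∈ℛ_+} b_r(f)γ_r^{-1} = 0, meaning: for every ε > 0 there is a finite subset S_ε ⊂ ℛ_+ such that |b_r(f)γ_r^{-1}| < ε for all r ∈ ℛ_+ \ S_ε. -/

import Mathlib

open scoped ENNReal NNReal
open Filter Topology

noncomputable section

namespace DSW

variable {K : Type*} [NontriviallyNormedField K] [CompleteSpace K] [IsUltrametricDist K]

/-- The ring of integers `R = {x : K | ‖x‖ ≤ 1}`, as a subset of `K`. -/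
def Rint (K : Type*) [NontriviallyNormedField K] : Set K := {x : K | ‖x‖ ≤ 1}

/-- `∇ⁿR`: the set of tuples of pairwise distinct elements of `R`. -/
def nabla (K : Type*) [NontriviallyNormedField K] (n : ℕ) : Set (Fin n → K) :=
  {x | (∀ i, ‖x i‖ ≤ 1) ∧ Function.Injective x}

/-- The `n`-th difference quotient `Φₙ f`. -/
def Phi (f : K → K) : ∀ n : ℕ, (Fin (n + 1) → K) → K
  | 0, x => f (x 0)
  | n + 1, x =>
      (Phi f n (Fin.cons (x 0) fun i => x i.succ.succ) -
        Phi f n (Fin.cons (x 1) fun i => x i.succ.succ)) / (x 0 - x 1)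

/-- `f` is a `Cⁿ`-function: `Φₙ f` extends to a continuous function on `R^(n+1)`. -/
def IsCn (f : K → K) (n : ℕ) : Prop :=
  ∃ g : (Fin (n + 1) → K) → K,
    ContinuousOn g {x | ∀ i, ‖x i‖ ≤ 1} ∧
      ∀ x : Fin (n + 1) → K, (∀ i, ‖x i‖ ≤ 1) → Function.Injective x → g x = Phi f n x

/-- `Dₙ f a = Φₙ f (a, …, a)`, defined (for `n ≥ 1`) as the limit of `Φₙ f` at the
diagonal point `(a, …, a)`, and `D₀ f = f`. -/
def Dq (f : K → K) : ℕ → K → K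
  | 0 => f
  | n + 1 => fun a =>
      limUnder (𝓝[{x : Fin (n + 2) → K | Function.Injective x}] fun _ => a) (Phi f (n + 1))

/-- `ψⱼ f (x, y) = (f x − f y − ∑_{l=1}^{j} (x−y)^l Dₗf y) / (x−y)^(j+1)`. -/
def psi (f : K → K) (j : ℕ) (x y : K) : K :=
  (f x - f y - ∑ l ∈ Finset.Icc 1 j, (x - y) ^ l * Dq f l y) / (x - y) ^ (j + 1)

variable (π : K) (𝒯 : Set K)

/-- `ℛₘ`: the set of sums `∑_{i<m} aᵢ πⁱ` with digits in `𝒯`. -/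
def Rm (m : ℕ) : Set K :=
  {x | ∃ a : Fin m → K, (∀ i, a i ∈ 𝒯) ∧ x = ∑ i, a i * π ^ (i : ℕ)}

/-- `ℛ = ⋃ₘ ℛₘ`. -/
def RR : Set K := ⋃ m, Rm π 𝒯 m

/-- `ℛ₊ = ℛ \ {0}`. -/
def RPlus : Set K := RR π 𝒯 \ {0}

/-- The length `l(r)`: the least `m` with `r ∈ ℛₘ`. -/
def len (r : K) : ℕ := sInf {m | r ∈ Rm π 𝒯 m}

/-- `χ_r`: characteristic function of the disk `{x : ‖x − r‖ ≤ ‖π‖^(l r)}`. -/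
def chi (r x : K) : K := if ‖x - r‖ ≤ ‖π‖ ^ len π 𝒯 r then 1 else 0

/-- The truncation `x_m`: the unique element of `ℛₘ` with `‖x − x_m‖ ≤ ‖π‖^m`. -/
def trunc (x : K) (m : ℕ) : K :=
  Classical.epsilon fun s => s ∈ Rm π 𝒯 m ∧ ‖x - s‖ ≤ ‖π‖ ^ m

/-- `r₋`: the truncation of `r` dropping the top digit. -/
def rminus (r : K) : K := trunc π 𝒯 r (len π 𝒯 r - 1)

open Classical in
/-- `γ_r = 1` if `r = 0`, `γ_r = r − r₋` otherwise. -/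
def gamma (r : K) : K := if r = 0 then 1 else r - rminus π 𝒯 r

open Classical in
/-- The wavelet coefficients `b_r(f)` of a continuous function. -/
def b0 (f : K → K) (r : K) : K := if r = 0 then f 0 else f r - f (rminus π 𝒯 r)

/-- `c` is the coefficient family of the expansion of `f` with respect to the wavelet
basis `{γ_r^(n−j) (x − r)^j χ_r(x) : r ∈ ℛ, 0 ≤ j ≤ n}` of `Cⁿ(R, K)`. -/
def IsExpansion (n : ℕ) (f : K → K) (c : K → ℕ → K) : Prop :=
  ∀ x ∈ Rint K, HasSum
    (fun p : RR π 𝒯 × Fin (n + 1) =>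
      c ↑p.1 ↑p.2 * gamma π 𝒯 ↑p.1 ^ (n - (p.2 : ℕ)) * (x - ↑p.1) ^ (p.2 : ℕ) *
        chi π 𝒯 ↑p.1 x)
    (f x)

/-- The coefficients `b_r^{n,j}(f)` of the expansion of `f ∈ Cⁿ(R,K)`. -/
def bcoef (n : ℕ) (f : K → K) : K → ℕ → K := Classical.epsilon (IsExpansion π 𝒯 n f)

/-- The norm `|f|_n` on `Cⁿ(R, K)`, with values in `ℝ≥0∞`; `|f|_0` is the sup norm and
`|f|_(n+1) = sup_{r ∈ ℛ} max_{0 ≤ j ≤ n} |b_r^{n,j}(f) γ_r⁻¹|`. -/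
def CnNorm : ℕ → (K → K) → ℝ≥0∞
  | 0, f => ⨆ x : Rint K, (‖f ↑x‖₊ : ℝ≥0∞)
  | n + 1, f =>
      ⨆ r : RR π 𝒯, ⨆ j : Fin (n + 1),
        (‖bcoef π 𝒯 n f ↑r ↑j * (gamma π 𝒯 ↑r)⁻¹‖₊ : ℝ≥0∞)

/-- `K` is a local field with uniformizer `π`, residue field of cardinality `q`, and
set of residue representatives `𝒯` (containing `0`). -/
structure LocalFieldData (π : K) (𝒯 : Set K) (q : ℕ) : Prop where
  one_lt_q : 1 < q
  norm_pi : ‖π‖ = (q : ℝ)⁻¹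
  norm_discrete : ∀ x : K, x ≠ 0 → ∃ n : ℤ, ‖x‖ = ‖π‖ ^ n
  rep_subset : 𝒯 ⊆ Rint K
  zero_mem : (0 : K) ∈ 𝒯
  finite_rep : 𝒯.Finite
  card_rep : Nat.card 𝒯 = q
  rep_unique : ∀ x : K, ‖x‖ ≤ 1 → ∃! t, t ∈ 𝒯 ∧ ‖x - t‖ < 1


/-- The norm `|f|₁ = sup_{r ∈ ℛ} |b_r(f) γ_r⁻¹|` on `C¹(R, K)`. -/
def wnorm1 (f : K → K) : ℝ≥0∞ :=
  ⨆ r : RR π 𝒯, (‖b0 π 𝒯 f ↑r * (gamma π 𝒯 ↑r)⁻¹‖₊ : ℝ≥0∞)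

/-- The `Cⁿ`-antiderivation `Pₙ f (x) = ∑_{j<n} ∑_m f⁽ʲ⁾(x_m)/(j+1)! (x_{m+1} − x_m)^(j+1)`. -/
def Pn (n : ℕ) (f : K → K) (x : K) : K :=
  ∑ j ∈ Finset.range n, ∑' m : ℕ,
    iteratedDeriv j f (trunc π 𝒯 x m) / (((j + 1).factorial : ℕ) : K) *
      (trunc π 𝒯 x (m + 1) - trunc π 𝒯 x m) ^ (j + 1)

/-- `Pₙ ∘ Pₙ₋₁ ∘ ⋯ ∘ P₁`. -/
def Tnaux : ℕ → (K → K) → K → K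
  | 0, f => f
  | n + 1, f => Pn π 𝒯 (n + 1) (Tnaux n f)

set_option linter.unusedSectionVars false
section Found
variable {q : ℕ}

lemma norm_pi_pos (hK : LocalFieldData π 𝒯 q) : 0 < ‖π‖ := by
  rw [hK.norm_pi]
  have : (1:ℝ) < q := by exact_mod_cast hK.one_lt_q
  positivity

lemma norm_pi_lt_one (hK : LocalFieldData π 𝒯 q) : ‖π‖ < 1 := by
  rw [hK.norm_pi]
  have h1 : (1:ℝ) < q := by exact_mod_cast hK.one_lt_q
  rw [inv_lt_one_iff₀]; right; exact h1

lemma pi_ne_zero (hK : LocalFieldData π 𝒯 q) : π ≠ 0 := by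
  intro h; have := norm_pi_pos π 𝒯 hK; rw [h, norm_zero] at this; exact lt_irrefl _ this

lemma zero_mem_Rm (hK : LocalFieldData π 𝒯 q) (m : ℕ) : (0:K) ∈ Rm π 𝒯 m := by
  exact ⟨fun _ => 0, fun _ => hK.zero_mem, by simp⟩

lemma Rm_zero : Rm π 𝒯 0 = {(0:K)} := by
  ext x
  constructor
  · rintro ⟨a, -, rfl⟩; simp
  · rintro rfl; exact ⟨Fin.elim0, fun i => i.elim0, by simp⟩

lemma Rm_subset_Rint (hK : LocalFieldData π 𝒯 q) (m : ℕ) : Rm π 𝒯 m ⊆ Rint K := by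
  rintro x ⟨a, ha, rfl⟩
  refine IsUltrametricDist.norm_sum_le_of_forall_le_of_nonneg zero_le_one ?_
  intro i _
  rw [norm_mul, norm_pow]
  have h1 : ‖a i‖ ≤ 1 := hK.rep_subset (ha i)
  have h2 : ‖π‖ ^ (i:ℕ) ≤ 1 := pow_le_one₀ (norm_nonneg _) (norm_pi_lt_one π 𝒯 hK).le
  calc ‖a i‖ * ‖π‖^(i:ℕ) ≤ 1 * 1 := by
        exact mul_le_mul h1 h2 (by positivity) zero_le_one
    _ = 1 := by ring

lemma Rm_finite (hK : LocalFieldData π 𝒯 q) (m : ℕ) : (Rm π 𝒯 m).Finite := by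
  have : Rm π 𝒯 m ⊆ (fun a : Fin m → K => ∑ i, a i * π ^ (i:ℕ)) ''
      (Set.univ.pi fun _ => 𝒯) := by
    rintro x ⟨a, ha, rfl⟩
    exact ⟨a, fun i _ => ha i, rfl⟩
  exact ((Set.Finite.pi fun _ => hK.finite_rep).image _).subset this

end Found
/-- Discreteness: a norm strictly below `‖π‖^m` is at most `‖π‖^(m+1)`. -/
lemma norm_lt_imp (hK : LocalFieldData π 𝒯 q) {x : K} {m : ℕ} (h : ‖x‖ < ‖π‖ ^ m) :
    ‖x‖ ≤ ‖π‖ ^ (m + 1) := by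
  rcases eq_or_ne x 0 with rfl | hx
  · simp only [norm_zero]; positivity
  obtain ⟨n, hn⟩ := hK.norm_discrete x hx
  rw [hn] at h ⊢
  have hπ1 : ‖π‖ < 1 := norm_pi_lt_one π 𝒯 hK
  have hπ0 : 0 < ‖π‖ := norm_pi_pos π 𝒯 hK
  have : (m : ℤ) < n := by
    by_contra hc
    push_neg at hc
    have := zpow_le_zpow_right_of_le_one₀ hπ0 hπ1.le hc
    rw [zpow_natCast] at this
    exact absurd h (not_lt.2 this)
  have h2 : ((m:ℤ) + 1) ≤ n := by omega
  have := zpow_le_zpow_right_of_le_one₀ hπ0 hπ1.le h2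
  calc ‖π‖ ^ n ≤ ‖π‖ ^ ((m:ℤ)+1) := this
    _ = ‖π‖ ^ (m+1) := by rw [← zpow_natCast]; norm_cast

/-- Discreteness: a norm strictly above `‖π‖^(m+1)` is at least `‖π‖^m`. -/
lemma norm_gt_imp (hK : LocalFieldData π 𝒯 q) {x : K} {m : ℕ} (h : ‖π‖ ^ (m+1) < ‖x‖) :
    ‖π‖ ^ m ≤ ‖x‖ := by
  by_contra hc
  push_neg at hc
  exact absurd h (not_lt.2 (norm_lt_imp π 𝒯 hK hc))

lemma norm_sub_le_max (x y : K) : ‖x - y‖ ≤ max ‖x‖ ‖y‖ := by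
  have := IsUltrametricDist.norm_add_le_max x (-y)
  simpa [sub_eq_add_neg, le_max_iff] using this

/-- Separation: distinct elements of `ℛₘ` are at distance `> ‖π‖^m`. -/
lemma Rm_sep (hK : LocalFieldData π 𝒯 q) :
    ∀ m : ℕ, ∀ s₁ ∈ Rm π 𝒯 m, ∀ s₂ ∈ Rm (𝒯 := 𝒯) π m,
      ‖s₁ - s₂‖ ≤ ‖π‖ ^ m → s₁ = s₂ := by
  intro m
  induction m with
  | zero => intro s₁ h₁ s₂ h₂ _
            rw [Rm_zero] at h₁ h₂; rw [h₁, h₂]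
  | succ m ih =>
    rintro s₁ ⟨a, ha, rfl⟩ s₂ ⟨b, hb, rfl⟩ hd
    have hπ0 : 0 < ‖π‖ := norm_pi_pos π 𝒯 hK
    have hπ1 : ‖π‖ < 1 := norm_pi_lt_one π 𝒯 hK
    have key : ∀ c : Fin (m+1) → K,
        ∑ i, c i * π ^ (i:ℕ) = c 0 + π * ∑ i : Fin m, c i.succ * π ^ (i:ℕ) := by
      intro c
      rw [Fin.sum_univ_succ, Finset.mul_sum]
      simp only [Fin.val_zero, pow_zero, mul_one]
      congr 1
      refine Finset.sum_congr rfl fun i _ => ?_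
      rw [Fin.val_succ, pow_succ]; ring
    set s₁' := ∑ i : Fin m, a i.succ * π ^ (i:ℕ) with hs₁'
    set s₂' := ∑ i : Fin m, b i.succ * π ^ (i:ℕ) with hs₂'
    have h₁' : s₁' ∈ Rm (𝒯 := 𝒯) π m := ⟨fun i => a i.succ, fun i => ha _, rfl⟩
    have h₂' : s₂' ∈ Rm (𝒯 := 𝒯) π m := ⟨fun i => b i.succ, fun i => hb _, rfl⟩
    rw [key a, key b] at hd ⊢
    have hdiff : (a 0 + π * s₁') - (b 0 + π * s₂') = (a 0 - b 0) + π * (s₁' - s₂') := by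
      ring
    -- norm of π * (s₁' - s₂') is at most ‖π‖
    have hn' : ‖π * (s₁' - s₂')‖ ≤ ‖π‖ := by
      rw [norm_mul]
      have h1 : ‖s₁' - s₂'‖ ≤ 1 := by
        refine (norm_sub_le_max s₁' s₂').trans (max_le ?_ ?_)
        · exact Rm_subset_Rint π 𝒯 hK m h₁'
        · exact Rm_subset_Rint π 𝒯 hK m h₂'
      calc ‖π‖ * ‖s₁' - s₂'‖ ≤ ‖π‖ * 1 := by
            exact mul_le_mul_of_nonneg_left h1 hπ0.le
        _ = ‖π‖ := mul_one _
    have hab : ‖a 0 - b 0‖ ≤ ‖π‖ := by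
      have : a 0 - b 0 = ((a 0 + π * s₁') - (b 0 + π * s₂')) - π * (s₁' - s₂') := by ring
      rw [this]
      refine (norm_sub_le_max _ _).trans (max_le ?_ hn')
      refine hd.trans ?_
      calc ‖π‖ ^ (m+1) = ‖π‖ * ‖π‖ ^ m := by rw [pow_succ]; ring
        _ ≤ ‖π‖ * 1 := by
            exact mul_le_mul_of_nonneg_left (pow_le_one₀ hπ0.le hπ1.le) hπ0.le
        _ = ‖π‖ := mul_one _
    have hab' : a 0 = b 0 := by
      obtain ⟨t, ht, hu⟩ := hK.rep_unique (a 0) (hK.rep_subset (ha 0))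
      have e1 : a 0 = t := hu (a 0) ⟨ha 0, by simp [zero_lt_one]⟩
      have e2 : b 0 = t := hu (b 0) ⟨hb 0, lt_of_le_of_lt hab hπ1⟩
      rw [e1, e2]
    have hsub : ‖s₁' - s₂'‖ ≤ ‖π‖ ^ m := by
      have h1 : ‖π * (s₁' - s₂')‖ ≤ ‖π‖ ^ (m+1) := by
        have : π * (s₁' - s₂') = (a 0 + π * s₁') - (b 0 + π * s₂') := by
          rw [hab']; ring
        rw [this]; exact hd
      rw [norm_mul, pow_succ'] at h1
      exact le_of_mul_le_mul_left h1 hπ0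
    have := ih s₁' h₁' s₂' h₂' hsub
    rw [hab', ← hs₁', ← hs₂', this]
lemma sum_fin_succ (m : ℕ) (c : Fin (m+1) → K) :
    ∑ i, c i * π ^ (i:ℕ) = c 0 + π * ∑ i : Fin m, c i.succ * π ^ (i:ℕ) := by
  rw [Fin.sum_univ_succ, Finset.mul_sum]
  simp only [Fin.val_zero, pow_zero, mul_one]
  congr 1
  refine Finset.sum_congr rfl fun i _ => ?_
  rw [Fin.val_succ, pow_succ]; ring

lemma mem_Rm_succ (hK : LocalFieldData π 𝒯 q) {t s' : K} {m : ℕ}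
    (ht : t ∈ 𝒯) (hs' : s' ∈ Rm (𝒯 := 𝒯) π m) : t + π * s' ∈ Rm (𝒯 := 𝒯) π (m+1) := by
  obtain ⟨a, ha, rfl⟩ := hs'
  refine ⟨Fin.cons t (fun i => a i), ?_, ?_⟩
  · intro i
    refine Fin.cases ?_ ?_ i
    · simpa using ht
    · intro j; simpa using ha j
  · rw [sum_fin_succ]
    simp

lemma exists_trunc (hK : LocalFieldData π 𝒯 q) {x : K} (hx : ‖x‖ ≤ 1) (m : ℕ) :
    ∃ s, s ∈ Rm (𝒯 := 𝒯) π m ∧ ‖x - s‖ ≤ ‖π‖ ^ m := by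
  induction m generalizing x with
  | zero => exact ⟨0, zero_mem_Rm π 𝒯 hK 0, by simpa using hx⟩
  | succ m ih =>
    have hπ0 : 0 < ‖π‖ := norm_pi_pos π 𝒯 hK
    obtain ⟨t, ⟨ht, htx⟩, -⟩ := hK.rep_unique x hx
    have htπ : ‖x - t‖ ≤ ‖π‖ := by
      have := norm_lt_imp π 𝒯 hK (m := 0) (by simpa using htx)
      simpa using this
    set y := (x - t) / π with hy
    have hy1 : ‖y‖ ≤ 1 := by
      rw [hy, norm_div, div_le_one hπ0]
      exact htπ
    obtain ⟨s', hs', hys'⟩ := ih hy1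
    refine ⟨t + π * s', mem_Rm_succ π 𝒯 hK ht hs', ?_⟩
    have hπne : π ≠ 0 := pi_ne_zero π 𝒯 hK
    have hxt : x - t = π * y := by
      rw [hy, mul_div_cancel₀ _ hπne]
    have heq : x - (t + π * s') = π * (y - s') := by
      rw [mul_sub, ← hxt]; ring
    rw [heq, norm_mul, pow_succ']
    exact mul_le_mul_of_nonneg_left hys' hπ0.le
lemma trunc_spec (hK : LocalFieldData π 𝒯 q) {x : K} (hx : x ∈ Rint K) (m : ℕ) :
    trunc π 𝒯 x m ∈ Rm (𝒯 := 𝒯) π m ∧ ‖x - trunc π 𝒯 x m‖ ≤ ‖π‖ ^ m := by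
  have h := exists_trunc π 𝒯 hK hx m
  obtain ⟨s, hs⟩ := h
  exact Classical.epsilon_spec (p := fun s => s ∈ Rm (𝒯 := 𝒯) π m ∧ ‖x - s‖ ≤ ‖π‖ ^ m) ⟨s, hs⟩

lemma trunc_eq (hK : LocalFieldData π 𝒯 q) {x s : K} (hx : x ∈ Rint K) {m : ℕ}
    (hs : s ∈ Rm (𝒯 := 𝒯) π m) (hd : ‖x - s‖ ≤ ‖π‖ ^ m) : trunc π 𝒯 x m = s := by
  obtain ⟨h1, h2⟩ := trunc_spec π 𝒯 hK hx m
  refine Rm_sep π 𝒯 hK m _ h1 _ hs ?_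
  have : trunc π 𝒯 x m - s = (x - s) - (x - trunc π 𝒯 x m) := by ring
  rw [this]
  exact (norm_sub_le_max _ _).trans (max_le hd h2)

lemma trunc_mem_Rint (hK : LocalFieldData π 𝒯 q) {x : K} (hx : x ∈ Rint K) (m : ℕ) :
    trunc π 𝒯 x m ∈ Rint K :=
  Rm_subset_Rint π 𝒯 hK m (trunc_spec π 𝒯 hK hx m).1

lemma mem_RR_of_mem_Rm {r : K} {m : ℕ} (h : r ∈ Rm (𝒯 := 𝒯) π m) : r ∈ RR π 𝒯 :=
  Set.mem_iUnion.2 ⟨m, h⟩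

lemma len_le {r : K} {m : ℕ} (h : r ∈ Rm (𝒯 := 𝒯) π m) : len π 𝒯 r ≤ m :=
  Nat.sInf_le h

lemma mem_Rm_len {r : K} (h : r ∈ RR π 𝒯) : r ∈ Rm (𝒯 := 𝒯) π (len π 𝒯 r) := by
  obtain ⟨m, hm⟩ := Set.mem_iUnion.1 h
  exact Nat.sInf_mem (s := {n | r ∈ Rm (𝒯 := 𝒯) π n}) ⟨m, hm⟩

lemma RR_subset_Rint (hK : LocalFieldData π 𝒯 q) : RR π 𝒯 ⊆ Rint K := by
  intro r hr
  exact Rm_subset_Rint π 𝒯 hK _ (mem_Rm_len π 𝒯 hr)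

lemma len_pos {r : K} (h : r ∈ RPlus π 𝒯) : 1 ≤ len π 𝒯 r := by
  rcases Nat.eq_zero_or_pos (len π 𝒯 r) with h0 | h1
  · exfalso
    have := mem_Rm_len π 𝒯 h.1
    rw [h0, Rm_zero] at this
    exact h.2 this
  · exact h1

lemma rminus_spec (hK : LocalFieldData π 𝒯 q) {r : K} (h : r ∈ RPlus π 𝒯) :
    rminus π 𝒯 r ∈ Rm (𝒯 := 𝒯) π (len π 𝒯 r - 1) ∧
      ‖r - rminus π 𝒯 r‖ ≤ ‖π‖ ^ (len π 𝒯 r - 1) :=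
  trunc_spec π 𝒯 hK (RR_subset_Rint π 𝒯 hK h.1) _

lemma gamma_sub_ne (hK : LocalFieldData π 𝒯 q) {r : K} (h : r ∈ RPlus π 𝒯) :
    r - rminus π 𝒯 r ≠ 0 := by
  intro h0
  have hr : r = rminus π 𝒯 r := by linear_combination h0
  have h1 := (rminus_spec π 𝒯 hK h).1
  rw [← hr] at h1
  have := len_le π 𝒯 h1
  have := len_pos π 𝒯 h
  omega

lemma gamma_eq (h : r ∈ RPlus π 𝒯) : gamma π 𝒯 r = r - rminus π 𝒯 r := by
  rw [gamma, if_neg (show r ≠ 0 by simpa using h.2)]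

lemma norm_gamma_le (hK : LocalFieldData π 𝒯 q) {r : K} (h : r ∈ RPlus π 𝒯) :
    ‖gamma π 𝒯 r‖ ≤ ‖π‖ ^ (len π 𝒯 r - 1) := by
  rw [gamma_eq π 𝒯 h]
  exact (rminus_spec π 𝒯 hK h).2

lemma norm_gamma_pos (hK : LocalFieldData π 𝒯 q) {r : K} (h : r ∈ RPlus π 𝒯) :
    0 < ‖gamma π 𝒯 r‖ := by
  rw [gamma_eq π 𝒯 h]
  exact norm_pos_iff.2 (gamma_sub_ne π 𝒯 hK h)
lemma Rm_mono (hK : LocalFieldData π 𝒯 q) {m m' : ℕ} (h : m ≤ m') :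
    Rm π 𝒯 m ⊆ Rm (𝒯 := 𝒯) π m' := by
  classical
  rintro x ⟨a, ha, rfl⟩
  set A : ℕ → K := fun i => if h : i < m then a ⟨i, h⟩ else 0 with hA
  refine ⟨fun i : Fin m' => A i, ?_, ?_⟩
  · intro i
    by_cases hi : (i:ℕ) < m
    · simpa [hA, hi] using ha ⟨i, hi⟩
    · simpa [hA, hi] using hK.zero_mem
  · have h1 : ∑ i : Fin m, a i * π ^ (i:ℕ) = ∑ i : Fin m, A i * π ^ (i:ℕ) := by
      refine Finset.sum_congr rfl fun i _ => ?_
      simp [hA, i.isLt]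
    rw [h1]
    have h2 : ∑ i : Fin m, A i * π ^ (i:ℕ) = ∑ i ∈ Finset.range m, A i * π ^ i :=
      Fin.sum_univ_eq_sum_range (fun i => A i * π ^ i) _
    have h3 : ∑ i : Fin m', A i * π ^ (i:ℕ) = ∑ i ∈ Finset.range m', A i * π ^ i :=
      Fin.sum_univ_eq_sum_range (fun i => A i * π ^ i) _
    rw [h2, h3]
    refine (Finset.sum_subset (f := fun i => A i * π ^ i) (Finset.range_subset_range.2 h) ?_)
    intro i _ hi
    have : ¬ i < m := by simpa using hi
    simp [hA, this]
lemma b0_eq (f : K → K) {r : K} (h : r ≠ 0) :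
    b0 π 𝒯 f r = f r - f (rminus π 𝒯 r) := by
  rw [b0, if_neg h]

lemma pow_pi_anti (hK : LocalFieldData π 𝒯 q) {m m' : ℕ} (h : m ≤ m') :
    ‖π‖ ^ m' ≤ ‖π‖ ^ m :=
  pow_le_pow_of_le_one (norm_pi_pos π 𝒯 hK).le (norm_pi_lt_one π 𝒯 hK).le h

lemma trunc_step (hK : LocalFieldData π 𝒯 q) {x : K} (hx : x ∈ Rint K) (M : ℕ)
    (h : trunc π 𝒯 x (M+1) ≠ trunc π 𝒯 x M) :
    trunc π 𝒯 x (M+1) ∈ RPlus π 𝒯 ∧ len π 𝒯 (trunc π 𝒯 x (M+1)) = M + 1 ∧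
      rminus π 𝒯 (trunc π 𝒯 x (M+1)) = trunc π 𝒯 x M := by
  set r := trunc π 𝒯 x (M+1) with hr
  obtain ⟨hrm, hrd⟩ := trunc_spec π 𝒯 hK hx (M+1)
  have hrdM : ‖x - r‖ ≤ ‖π‖ ^ M := hrd.trans (pow_pi_anti π 𝒯 hK (by omega))
  have hnot : r ∉ Rm (𝒯 := 𝒯) π M := by
    intro hmem
    exact h (trunc_eq π 𝒯 hK hx hmem hrdM).symm
  have hr0 : r ≠ 0 := by
    intro h0
    exact hnot (h0 ▸ zero_mem_Rm π 𝒯 hK M)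
  have hrRR : r ∈ RR π 𝒯 := mem_RR_of_mem_Rm π 𝒯 hrm
  have hrP : r ∈ RPlus π 𝒯 := ⟨hrRR, hr0⟩
  have hlen : len π 𝒯 r = M + 1 := by
    have h1 : len π 𝒯 r ≤ M + 1 := len_le π 𝒯 hrm
    have h2 : ¬ len π 𝒯 r ≤ M := by
      intro hle
      exact hnot (Rm_mono π 𝒯 hK hle (mem_Rm_len π 𝒯 hrRR))
    omega
  refine ⟨hrP, hlen, ?_⟩
  rw [rminus, hlen]
  simp only [Nat.add_sub_cancel]
  refine trunc_eq π 𝒯 hK (RR_subset_Rint π 𝒯 hK hrRR) (trunc_spec π 𝒯 hK hx M).1 ?_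
  have : r - trunc π 𝒯 x M = (x - trunc π 𝒯 x M) - (x - r) := by ring
  rw [this]
  exact (norm_sub_le_max _ _).trans (max_le (trunc_spec π 𝒯 hK hx M).2 hrdM)

lemma trunc_congr (hK : LocalFieldData π 𝒯 q) {x y : K} (hx : x ∈ Rint K)
    (hy : y ∈ Rint K) {M : ℕ} (h : ‖x - y‖ ≤ ‖π‖ ^ M) :
    trunc π 𝒯 x M = trunc π 𝒯 y M := by
  refine trunc_eq π 𝒯 hK hx (trunc_spec π 𝒯 hK hy M).1 ?_
  have : x - trunc π 𝒯 y M = (x - y) + (y - trunc π 𝒯 y M) := by ring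
  rw [this]
  refine (IsUltrametricDist.norm_add_le_max _ _).trans (max_le h (trunc_spec π 𝒯 hK hy M).2)

lemma tendsto_f_trunc (hK : LocalFieldData π 𝒯 q) {f : K → K}
    (hf : ContinuousOn f (Rint K)) {x : K} (hx : x ∈ Rint K) :
    Tendsto (fun M => f (trunc π 𝒯 x M)) atTop (𝓝 (f x)) := by
  have hπ0 : 0 < ‖π‖ := norm_pi_pos π 𝒯 hK
  have hπ1 : ‖π‖ < 1 := norm_pi_lt_one π 𝒯 hK
  have hd : Tendsto (fun M => trunc π 𝒯 x M) atTop (𝓝 x) := by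
    rw [tendsto_iff_dist_tendsto_zero]
    refine squeeze_zero (fun M => dist_nonneg) (fun M => ?_)
      (tendsto_pow_atTop_nhds_zero_of_lt_one hπ0.le hπ1)
    rw [dist_eq_norm, ← norm_neg]
    simpa using (trunc_spec π 𝒯 hK hx M).2
  have hdw : Tendsto (fun M => trunc π 𝒯 x M) atTop (𝓝[Rint K] x) :=
    tendsto_nhdsWithin_of_tendsto_nhds_of_eventually_within _ hd
      (Eventually.of_forall fun M => trunc_mem_Rint π 𝒯 hK hx M)
  exact ((hf x hx).tendsto).comp hdw
lemma Phi_one (f : K → K) (v : Fin 2 → K) :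
    Phi f 1 v = (f (v 0) - f (v 1)) / (v 0 - v 1) := by
  simp [Phi]

lemma norm_add_eq_left {a b : K} (h : ‖b‖ < ‖a‖) : ‖a + b‖ = ‖a‖ := by
  rw [IsUltrametricDist.norm_add_eq_max_of_norm_ne_norm (by rw [ne_eq]; exact fun he => absurd he.symm h.ne)]
  exact max_eq_left h.le

/-- The compactness of the ring of integers. -/
lemma isCompact_Rint (hK : LocalFieldData π 𝒯 q) : IsCompact (Rint K) := by
  rw [isCompact_iff_totallyBounded_isComplete]
  constructor
  · rw [Metric.totallyBounded_iff]
    intro ε hε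
    have hπ0 : 0 < ‖π‖ := norm_pi_pos π 𝒯 hK
    have hπ1 : ‖π‖ < 1 := norm_pi_lt_one π 𝒯 hK
    obtain ⟨m, hm⟩ := exists_pow_lt_of_lt_one hε hπ1
    refine ⟨Rm π 𝒯 m, Rm_finite π 𝒯 hK m, ?_⟩
    intro x hx
    refine Set.mem_biUnion (trunc_spec π 𝒯 hK hx m).1 ?_
    rw [Metric.mem_ball, dist_eq_norm]
    exact lt_of_le_of_lt (trunc_spec π 𝒯 hK hx m).2 hm
  · refine IsClosed.isComplete ?_
    exact isClosed_le continuous_norm continuous_const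

lemma isCompact_B (hK : LocalFieldData π 𝒯 q) :
    IsCompact {x : Fin 2 → K | ∀ i, ‖x i‖ ≤ 1} := by
  have : {x : Fin 2 → K | ∀ i, ‖x i‖ ≤ 1} = Set.univ.pi (fun _ : Fin 2 => Rint K) := by
    ext x; simp [Rint, Set.mem_pi]
  rw [this]
  exact isCompact_univ_pi fun _ => isCompact_Rint π 𝒯 hK

/-- `a` is in the closure of `Rint K \ {a}` for `a ∈ Rint K`. -/
lemma nhdsWithin_punctured_neBot (hK : LocalFieldData π 𝒯 q) {a : K} (ha : a ∈ Rint K) :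
    (𝓝[Rint K \ {a}] a).NeBot := by
  rw [← mem_closure_iff_nhdsWithin_neBot]
  rw [Metric.mem_closure_iff]
  intro ε hε
  have hπ0 : 0 < ‖π‖ := norm_pi_pos π 𝒯 hK
  have hπ1 : ‖π‖ < 1 := norm_pi_lt_one π 𝒯 hK
  obtain ⟨m, hm⟩ := exists_pow_lt_of_lt_one hε hπ1
  refine ⟨a + π ^ m, ⟨?_, ?_⟩, ?_⟩
  · have : ‖π ^ m‖ ≤ 1 := by
      rw [norm_pow]; exact pow_le_one₀ hπ0.le hπ1.le
    exact (IsUltrametricDist.norm_add_le_max a (π ^ m)).trans (max_le ha this)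
  · simp only [Set.mem_singleton_iff]
    intro h
    have : π ^ m = 0 := by linear_combination h
    exact pow_ne_zero m (pi_ne_zero π 𝒯 hK) this
  · rw [dist_eq_norm]
    simpa [norm_pow] using hm
/-- coordinates continuity of the path `x ↦ (x, a)` -/
lemma path_cont (a : K) : Continuous (fun x : K => fun i : Fin 2 => if i = 0 then x else a) := by
  refine continuous_pi fun i => ?_
  by_cases h : i = 0 <;> simp [h] <;> continuity

lemma path_inj {a x : K} (h : x ≠ a) :
    Function.Injective (fun i : Fin 2 => if i = 0 then x else a) := by
  intro i j hij
  fin_cases i <;> fin_cases j <;> simp_all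

/-- If `g` is a continuous extension of `Φ₁ f` and `f` has derivative `0` at `a`,
then `g(a,a) = 0`. -/
lemma g_diag_eq_zero (hK : LocalFieldData π 𝒯 q) {f : K → K} {g : (Fin 2 → K) → K}
    (hg : ContinuousOn g {x : Fin 2 → K | ∀ i, ‖x i‖ ≤ 1})
    (hgval : ∀ x : Fin 2 → K, (∀ i, ‖x i‖ ≤ 1) → Function.Injective x → g x = Phi f 1 x)
    {a : K} (ha : a ∈ Rint K) (hda : HasDerivWithinAt f 0 (Rint K) a) :
    g (fun _ => a) = 0 := by
  haveI := nhdsWithin_punctured_neBot π 𝒯 hK ha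
  set v : K → (Fin 2 → K) := fun x => fun i : Fin 2 => if i = 0 then x else a with hv
  have hdiagB : (fun _ : Fin 2 => a) ∈ {x : Fin 2 → K | ∀ i, ‖x i‖ ≤ 1} := fun i => ha
  have hvB : ∀ x ∈ Rint K \ {a}, v x ∈ {x : Fin 2 → K | ∀ i, ‖x i‖ ≤ 1} := by
    intro x hx i
    by_cases h : i = 0 <;> simp [hv, h]
    exacts [hx.1, ha]
  have hvt : Tendsto v (𝓝[Rint K \ {a}] a) (𝓝[{x : Fin 2 → K | ∀ i, ‖x i‖ ≤ 1}] (fun _ => a)) := by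
    refine tendsto_nhdsWithin_of_tendsto_nhds_of_eventually_within _ ?_ ?_
    · have h1 : Tendsto v (𝓝 a) (𝓝 (v a)) := (path_cont a).tendsto a
      have h2 : v a = fun _ => a := by
        funext i; by_cases h : i = 0 <;> simp [hv, h]
      rw [h2] at h1
      exact h1.mono_left nhdsWithin_le_nhds
    · exact eventually_nhdsWithin_of_forall hvB
  have hgt : Tendsto (fun x => g (v x)) (𝓝[Rint K \ {a}] a) (𝓝 (g (fun _ => a))) :=
    (hg _ hdiagB).tendsto.comp hvt
  have hslope : Tendsto (slope f a) (𝓝[Rint K \ {a}] a) (𝓝 0) := by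
    have := hasDerivWithinAt_iff_tendsto_slope.1 hda
    simpa using this
  have hcong : (fun x => g (v x)) =ᶠ[𝓝[Rint K \ {a}] a] slope f a := by
    refine eventually_nhdsWithin_of_forall ?_
    intro x hx
    have hxa : x ≠ a := fun h => hx.2 (by simp [h])
    show g (v x) = slope f a x
    rw [hgval (v x) (hvB x hx) (path_inj hxa), Phi_one]
    have h0 : v x 0 = x := by simp [hv]
    have h1 : v x 1 = a := by simp [hv]
    rw [h0, h1, slope_def_field]
  exact tendsto_nhds_unique hgt (hslope.congr' hcong.symm)
lemma forward_dir (hK : LocalFieldData π 𝒯 q) {f : K → K}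
    (hC : IsCn f 1) (hD : ∀ a ∈ Rint K, HasDerivWithinAt f 0 (Rint K) a) :
    ∀ ε : ℝ, 0 < ε → ∃ S : Finset K, ↑S ⊆ RPlus π 𝒯 ∧
      ∀ r ∈ RPlus π 𝒯, r ∉ S → ‖b0 π 𝒯 f r * (gamma π 𝒯 r)⁻¹‖ < ε := by
  classical
  obtain ⟨g, hg, hgval⟩ := hC
  intro ε hε
  have hπ0 : 0 < ‖π‖ := norm_pi_pos π 𝒯 hK
  have hπ1 : ‖π‖ < 1 := norm_pi_lt_one π 𝒯 hK
  -- uniform continuity of g on the compact set B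
  have hUC := (isCompact_B π 𝒯 hK).uniformContinuousOn_of_continuous hg
  rw [Metric.uniformContinuousOn_iff] at hUC
  obtain ⟨δ, hδ, hUC⟩ := hUC ε hε
  obtain ⟨M, hM⟩ := exists_pow_lt_of_lt_one hδ hπ1
  refine ⟨((Rm_finite π 𝒯 hK (M+1)).toFinset).erase 0, ?_, ?_⟩
  · intro r hr
    simp only [Finset.coe_erase, Set.mem_diff, Set.Finite.coe_toFinset, Set.mem_singleton_iff]
      at hr
    exact ⟨mem_RR_of_mem_Rm π 𝒯 hr.1, hr.2⟩
  intro r hrP hrS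
  -- r has length at least M + 2
  have hlen : M + 2 ≤ len π 𝒯 r := by
    by_contra hc
    push_neg at hc
    have : r ∈ Rm (𝒯 := 𝒯) π (M+1) :=
      Rm_mono π 𝒯 hK (by omega) (mem_Rm_len π 𝒯 hrP.1)
    exact hrS (Finset.mem_erase.2 ⟨hrP.2, (Rm_finite π 𝒯 hK (M+1)).mem_toFinset.2 this⟩)
  set r' := rminus π 𝒯 r with hr'
  have hrR : r ∈ Rint K := RR_subset_Rint π 𝒯 hK hrP.1
  have hr'R : r' ∈ Rint K := Rm_subset_Rint π 𝒯 hK _ (rminus_spec π 𝒯 hK hrP).1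
  have hne : r ≠ r' := by
    intro h
    exact gamma_sub_ne π 𝒯 hK hrP (by rw [← hr', ← h]; ring)
  set v : Fin 2 → K := fun i => if i = 0 then r else r' with hv
  set w : Fin 2 → K := fun _ => r' with hw
  have hvB : v ∈ {x : Fin 2 → K | ∀ i, ‖x i‖ ≤ 1} := by
    intro i; by_cases h : i = 0 <;> simp [hv, h]
    exacts [hrR, hr'R]
  have hwB : w ∈ {x : Fin 2 → K | ∀ i, ‖x i‖ ≤ 1} := fun i => hr'R
  have hdist : dist v w < δ := by
    rw [dist_pi_lt_iff hδ]
    intro i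
    by_cases h : i = 0
    · simp only [hv, hw, h, if_pos]
      rw [dist_eq_norm]
      have h1 : ‖r - r'‖ ≤ ‖π‖ ^ (len π 𝒯 r - 1) := (rminus_spec π 𝒯 hK hrP).2
      refine lt_of_le_of_lt (h1.trans (pow_pi_anti π 𝒯 hK (by omega))) hM
    · simp only [hv, hw, h, if_neg, if_false]
      simpa using hδ
  have hgw : g w = 0 := g_diag_eq_zero π 𝒯 hK hg hgval hr'R (hD r' hr'R)
  have hgv : g v = b0 π 𝒯 f r * (gamma π 𝒯 r)⁻¹ := by
    rw [hgval v hvB (path_inj hne), Phi_one]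
    have h0 : v 0 = r := by simp [hv]
    have h1 : v 1 = r' := by simp [hv]
    rw [h0, h1, b0_eq π 𝒯 f hrP.2, gamma_eq π 𝒯 hrP, ← hr', div_eq_mul_inv]
  have := hUC v hvB w hwB hdist
  rw [dist_eq_norm, hgw, sub_zero, hgv] at this
  exact this
open Classical in
/-- The approximating difference quotients `G_M`. -/
def GM (f : K → K) (M : ℕ) : (Fin 2 → K) → K := fun v =>
  if v 0 = v 1 then 0
  else (f (trunc π 𝒯 (v 0) M) - f (trunc π 𝒯 (v 1) M)) / (v 0 - v 1)

lemma GM_eq_zero_of_close (hK : LocalFieldData π 𝒯 q) (f : K → K) {M : ℕ}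
    {v : Fin 2 → K} (h0 : v 0 ∈ Rint K) (h1 : v 1 ∈ Rint K)
    (h : ‖v 0 - v 1‖ ≤ ‖π‖ ^ M) : GM π 𝒯 f M v = 0 := by
  rw [GM]
  by_cases he : v 0 = v 1
  · rw [if_pos he]
  · rw [if_neg he, trunc_congr π 𝒯 hK h0 h1 h, sub_self, zero_div]

lemma GM_continuousOn (hK : LocalFieldData π 𝒯 q) {f : K → K}
    (hf : ContinuousOn f (Rint K)) (M : ℕ) :
    ContinuousOn (GM π 𝒯 f M) {x : Fin 2 → K | ∀ i, ‖x i‖ ≤ 1} := by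
  have hπ0 : 0 < ‖π‖ := norm_pi_pos π 𝒯 hK
  have hpM : (0:ℝ) < ‖π‖ ^ M := by positivity
  set B := {x : Fin 2 → K | ∀ i, ‖x i‖ ≤ 1} with hB
  intro v hv
  have hU : IsOpen {w : Fin 2 → K | ‖w 0 - v 0‖ < ‖π‖ ^ M ∧ ‖w 1 - v 1‖ < ‖π‖ ^ M} := by
    refine IsOpen.and ?_ ?_
    · exact isOpen_lt (Continuous.norm ((continuous_apply 0).sub continuous_const))
        continuous_const
    · exact isOpen_lt (Continuous.norm ((continuous_apply 1).sub continuous_const))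
        continuous_const
  have hUmem : {w : Fin 2 → K | ‖w 0 - v 0‖ < ‖π‖ ^ M ∧ ‖w 1 - v 1‖ < ‖π‖ ^ M} ∈ 𝓝[B] v := by
    refine mem_nhdsWithin_of_mem_nhds (hU.mem_nhds ?_)
    constructor <;> simpa using hpM
  by_cases h : ‖v 0 - v 1‖ ≤ ‖π‖ ^ M
  · -- GM vanishes near v
    have hEq : GM π 𝒯 f M =ᶠ[𝓝[B] v] (fun _ => (0:K)) := by
      filter_upwards [hUmem, self_mem_nhdsWithin] with w hw hwB
      refine GM_eq_zero_of_close π 𝒯 hK f (hwB 0) (hwB 1) ?_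
      have : w 0 - w 1 = (w 0 - v 0) + ((v 0 - v 1) - (w 1 - v 1)) := by ring
      rw [this]
      refine (IsUltrametricDist.norm_add_le_max _ _).trans (max_le hw.1.le ?_)
      exact (norm_sub_le_max _ _).trans (max_le h hw.2.le)
    refine ContinuousWithinAt.congr_of_eventuallyEq continuousWithinAt_const hEq ?_
    exact GM_eq_zero_of_close π 𝒯 hK f (hv 0) (hv 1) h
  · push_neg at h
    have hne : v 0 ≠ v 1 := by
      intro he
      rw [he, sub_self, norm_zero] at h
      exact absurd h (not_lt.2 hpM.le)
    set c := f (trunc π 𝒯 (v 0) M) - f (trunc π 𝒯 (v 1) M) with hc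
    have hEq : GM π 𝒯 f M =ᶠ[𝓝[B] v] (fun w => c / (w 0 - w 1)) := by
      filter_upwards [hUmem, self_mem_nhdsWithin] with w hw hwB
      have hlt : ‖(w 0 - v 0) - (w 1 - v 1)‖ < ‖v 0 - v 1‖ :=
        lt_of_le_of_lt (norm_sub_le_max _ _) ((max_lt hw.1 hw.2).trans h)
      have hw01 : ‖w 0 - w 1‖ = ‖v 0 - v 1‖ := by
        have he : w 0 - w 1 = (v 0 - v 1) + ((w 0 - v 0) - (w 1 - v 1)) := by ring
        rw [he, norm_add_eq_left hlt]
      have hwne : w 0 ≠ w 1 := by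
        intro he
        rw [he, sub_self, norm_zero] at hw01
        exact hne (by simpa [sub_eq_zero] using hw01.symm)
      rw [GM, if_neg hwne, trunc_congr π 𝒯 hK (hwB 0) (hv 0) hw.1.le,
        trunc_congr π 𝒯 hK (hwB 1) (hv 1) hw.2.le]
    refine ContinuousWithinAt.congr_of_eventuallyEq ?_ hEq ?_
    · refine ContinuousAt.continuousWithinAt ?_
      exact ContinuousAt.div continuousAt_const
        (((continuous_apply 0).sub (continuous_apply 1)).continuousAt)
        (sub_ne_zero.2 hne)
    · rw [GM, if_neg hne]
/-- one-step estimate for the `G_M` -/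
lemma GM_step (hK : LocalFieldData π 𝒯 q) {f : K → K} {ε : ℝ} (hε : 0 < ε)
    {S : Finset K} (hS : ∀ r ∈ RPlus π 𝒯, r ∉ S → ‖b0 π 𝒯 f r * (gamma π 𝒯 r)⁻¹‖ < ε)
    {j : ℕ} (hj : S.sup (len π 𝒯) ≤ j) {v : Fin 2 → K}
    (hv : v ∈ {x : Fin 2 → K | ∀ i, ‖x i‖ ≤ 1}) :
    ‖GM π 𝒯 f (j+1) v - GM π 𝒯 f j v‖ < ε := by
  have hπ0 : 0 < ‖π‖ := norm_pi_pos π 𝒯 hK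
  have hpj : (0:ℝ) < ‖π‖ ^ j := by positivity
  -- the key sub-estimate
  have hstep : ∀ z, z ∈ Rint K → ‖f (trunc π 𝒯 z (j+1)) - f (trunc π 𝒯 z j)‖ < ε * ‖π‖ ^ j := by
    intro z hz
    by_cases he : trunc π 𝒯 z (j+1) = trunc π 𝒯 z j
    · rw [he, sub_self, norm_zero]; positivity
    · obtain ⟨hrP, hlen, hrm⟩ := trunc_step π 𝒯 hK hz j he
      set r := trunc π 𝒯 z (j+1) with hr
      have hγ : gamma π 𝒯 r ≠ 0 := by
        rw [gamma_eq π 𝒯 hrP]; exact gamma_sub_ne π 𝒯 hK hrP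
      have hb : f (trunc π 𝒯 z (j+1)) - f (trunc π 𝒯 z j) = b0 π 𝒯 f r := by
        rw [b0_eq π 𝒯 f hrP.2, hrm]
      rw [hb]
      have hbg : b0 π 𝒯 f r = (b0 π 𝒯 f r * (gamma π 𝒯 r)⁻¹) * gamma π 𝒯 r := by
        field_simp
      rw [hbg, norm_mul]
      have hrnS : r ∉ S := by
        intro hmem
        have := Finset.le_sup (f := len π 𝒯) hmem
        omega
      have h1 : ‖b0 π 𝒯 f r * (gamma π 𝒯 r)⁻¹‖ < ε := hS r hrP hrnS
      have h2 : ‖gamma π 𝒯 r‖ ≤ ‖π‖ ^ j := by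
        have := norm_gamma_le π 𝒯 hK hrP
        rwa [hlen, Nat.add_sub_cancel] at this
      calc ‖b0 π 𝒯 f r * (gamma π 𝒯 r)⁻¹‖ * ‖gamma π 𝒯 r‖
          ≤ ‖b0 π 𝒯 f r * (gamma π 𝒯 r)⁻¹‖ * ‖π‖ ^ j :=
            mul_le_mul_of_nonneg_left h2 (norm_nonneg _)
        _ < ε * ‖π‖ ^ j := mul_lt_mul_of_pos_right h1 hpj
  by_cases hclose : ‖v 0 - v 1‖ ≤ ‖π‖ ^ (j+1)
  · rw [GM_eq_zero_of_close π 𝒯 hK f (hv 0) (hv 1) hclose,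
      GM_eq_zero_of_close π 𝒯 hK f (hv 0) (hv 1)
        (hclose.trans (pow_pi_anti π 𝒯 hK (by omega))),
      sub_self, norm_zero]
    exact hε
  · push_neg at hclose
    have hne : v 0 ≠ v 1 := by
      intro he
      rw [he, sub_self, norm_zero] at hclose
      exact absurd hclose (not_lt.2 (by positivity))
    have hd : ‖π‖ ^ j ≤ ‖v 0 - v 1‖ := norm_gt_imp π 𝒯 hK hclose
    have hform : GM π 𝒯 f (j+1) v - GM π 𝒯 f j v =
        ((f (trunc π 𝒯 (v 0) (j+1)) - f (trunc π 𝒯 (v 0) j)) -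
          (f (trunc π 𝒯 (v 1) (j+1)) - f (trunc π 𝒯 (v 1) j))) / (v 0 - v 1) := by
      rw [GM, GM, if_neg hne, if_neg hne, div_sub_div_same]
      congr 1
      ring
    rw [hform, norm_div]
    rw [div_lt_iff₀ (lt_of_lt_of_le hpj hd)]
    have hnum : ‖(f (trunc π 𝒯 (v 0) (j+1)) - f (trunc π 𝒯 (v 0) j)) -
        (f (trunc π 𝒯 (v 1) (j+1)) - f (trunc π 𝒯 (v 1) j))‖ < ε * ‖π‖ ^ j := by
      refine lt_of_le_of_lt (norm_sub_le_max _ _) ?_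
      exact max_lt (hstep (v 0) (hv 0)) (hstep (v 1) (hv 1))
    refine lt_of_lt_of_le hnum ?_
    exact mul_le_mul_of_nonneg_left hd hε.le
lemma GM_uniformCauchy (hK : LocalFieldData π 𝒯 q) {f : K → K}
    (H : ∀ ε : ℝ, 0 < ε → ∃ S : Finset K, ↑S ⊆ RPlus π 𝒯 ∧
      ∀ r ∈ RPlus π 𝒯, r ∉ S → ‖b0 π 𝒯 f r * (gamma π 𝒯 r)⁻¹‖ < ε) :
    UniformCauchySeqOn (fun M => GM π 𝒯 f M) atTop {x : Fin 2 → K | ∀ i, ‖x i‖ ≤ 1} := by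
  rw [Metric.uniformCauchySeqOn_iff]
  intro ε hε
  obtain ⟨S, -, hS⟩ := H ε hε
  set N := S.sup (len π 𝒯) with hN
  -- distance to the base point N
  have key : ∀ k : ℕ, ∀ v ∈ {x : Fin 2 → K | ∀ i, ‖x i‖ ≤ 1},
      ‖GM π 𝒯 f (N + k) v - GM π 𝒯 f N v‖ < ε := by
    intro k
    induction k with
    | zero => intro v hv; simpa using hε
    | succ k ih =>
      intro v hv
      have h1 : GM π 𝒯 f (N + (k+1)) v - GM π 𝒯 f N v =
          (GM π 𝒯 f ((N + k) + 1) v - GM π 𝒯 f (N + k) v) +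
            (GM π 𝒯 f (N + k) v - GM π 𝒯 f N v) := by
        have : N + (k + 1) = (N + k) + 1 := by omega
        rw [this]; ring
      rw [h1]
      refine lt_of_le_of_lt (IsUltrametricDist.norm_add_le_max _ _) (max_lt ?_ (ih v hv))
      exact GM_step π 𝒯 hK hε hS (by omega) hv
  refine ⟨N, fun m hm n hn v hv => ?_⟩
  obtain ⟨k, rfl⟩ := Nat.exists_eq_add_of_le hm
  obtain ⟨k', rfl⟩ := Nat.exists_eq_add_of_le hn
  rw [dist_eq_norm]
  have h1 : GM π 𝒯 f (N + k) v - GM π 𝒯 f (N + k') v =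
      (GM π 𝒯 f (N + k) v - GM π 𝒯 f N v) - (GM π 𝒯 f (N + k') v - GM π 𝒯 f N v) := by
    ring
  rw [h1]
  exact lt_of_le_of_lt (norm_sub_le_max _ _) (max_lt (key k v hv) (key k' v hv))
lemma reverse_dir (hK : LocalFieldData π 𝒯 q) {f : K → K} (hf : ContinuousOn f (Rint K))
    (H : ∀ ε : ℝ, 0 < ε → ∃ S : Finset K, ↑S ⊆ RPlus π 𝒯 ∧
      ∀ r ∈ RPlus π 𝒯, r ∉ S → ‖b0 π 𝒯 f r * (gamma π 𝒯 r)⁻¹‖ < ε) :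
    IsCn f 1 ∧ ∀ a ∈ Rint K, HasDerivWithinAt f 0 (Rint K) a := by
  set B := {x : Fin 2 → K | ∀ i, ‖x i‖ ≤ 1} with hB
  have hUC := GM_uniformCauchy π 𝒯 hK (f := f) H
  -- pointwise limit
  set G : (Fin 2 → K) → K := fun v => limUnder atTop (fun M => GM π 𝒯 f M v) with hG
  have hGtend : ∀ v ∈ B, Tendsto (fun M => GM π 𝒯 f M v) atTop (𝓝 (G v)) := by
    intro v hv
    exact (hUC.cauchySeq hv).tendsto_limUnder
  have hTU : TendstoUniformlyOn (fun M => GM π 𝒯 f M) G atTop B :=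
    hUC.tendstoUniformlyOn_of_tendsto hGtend
  have hGcont : ContinuousOn G B :=
    hTU.continuousOn (Frequently.of_forall fun M => GM_continuousOn π 𝒯 hK hf M)
  -- value of G at off-diagonal points
  have hGval : ∀ v : Fin 2 → K, (∀ i, ‖v i‖ ≤ 1) → v 0 ≠ v 1 →
      G v = (f (v 0) - f (v 1)) / (v 0 - v 1) := by
    intro v hv hne
    have h1 : Tendsto (fun M => GM π 𝒯 f M v) atTop
        (𝓝 ((f (v 0) - f (v 1)) / (v 0 - v 1))) := by
      have h2 : ∀ M, GM π 𝒯 f M v =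
          (f (trunc π 𝒯 (v 0) M) - f (trunc π 𝒯 (v 1) M)) / (v 0 - v 1) := by
        intro M; rw [GM, if_neg hne]
      rw [funext h2]
      exact Tendsto.div_const
        ((tendsto_f_trunc π 𝒯 hK hf (hv 0)).sub (tendsto_f_trunc π 𝒯 hK hf (hv 1))) _
    exact tendsto_nhds_unique (hGtend v hv) h1
  -- value of G on the diagonal
  have hGdiag : ∀ a ∈ Rint K, G (fun _ => a) = 0 := by
    intro a ha
    have h1 : ∀ M, GM π 𝒯 f M (fun _ : Fin 2 => a) = 0 := by
      intro M; rw [GM, if_pos rfl]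
    have h2 : Tendsto (fun M => GM π 𝒯 f M (fun _ : Fin 2 => a)) atTop (𝓝 0) := by
      rw [funext h1]; exact tendsto_const_nhds
    exact tendsto_nhds_unique (hGtend _ fun i => ha) h2
  constructor
  · refine ⟨G, hGcont, ?_⟩
    intro v hv hinj
    have hne : v 0 ≠ v 1 := fun h => absurd (hinj h) (by simp)
    rw [hGval v hv hne, Phi_one]
  · intro a ha
    rw [hasDerivWithinAt_iff_tendsto_slope]
    haveI := nhdsWithin_punctured_neBot π 𝒯 hK ha
    set v : K → (Fin 2 → K) := fun x => fun i : Fin 2 => if i = 0 then x else a with hv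
    have hdiagB : (fun _ : Fin 2 => a) ∈ B := fun i => ha
    have hvB : ∀ x ∈ Rint K \ {a}, v x ∈ B := by
      intro x hx i
      by_cases h : i = 0 <;> simp [hv, h]
      exacts [hx.1, ha]
    have hvt : Tendsto v (𝓝[Rint K \ {a}] a) (𝓝[B] (fun _ => a)) := by
      refine tendsto_nhdsWithin_of_tendsto_nhds_of_eventually_within _ ?_ ?_
      · have h1 : Tendsto v (𝓝 a) (𝓝 (v a)) := (path_cont a).tendsto a
        have h2 : v a = fun _ => a := by
          funext i; by_cases h : i = 0 <;> simp [hv, h]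
        rw [h2] at h1
        exact h1.mono_left nhdsWithin_le_nhds
      · exact eventually_nhdsWithin_of_forall hvB
    have hgt : Tendsto (fun x => G (v x)) (𝓝[Rint K \ {a}] a) (𝓝 (G (fun _ => a))) :=
      (hGcont _ hdiagB).tendsto.comp hvt
    rw [hGdiag a ha] at hgt
    have hcong : slope f a =ᶠ[𝓝[Rint K \ {a}] a] (fun x => G (v x)) := by
      refine eventually_nhdsWithin_of_forall ?_
      intro x hx
      have hxa : x ≠ a := fun h => hx.2 (by simp [h])
      have h0 : v x 0 = x := by simp [hv]
      have h1 : v x 1 = a := by simp [hv]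
      show slope f a x = G (v x)
      rw [hGval (v x) (hvB x hx) (by rw [h0, h1]; exact hxa), h0, h1, slope_def_field]
    simpa using hgt.congr' hcong.symm

/-- A continuous `f : R → K` is an `N¹`-function (a `C¹`-function with `f' = 0`) iff
`lim_{r ∈ ℛ₊} b_r(f)γ_r⁻¹ = 0`: for every `ε > 0` there is a finite `S_ε ⊆ ℛ₊` with
`|b_r(f)γ_r⁻¹| < ε` for all `r ∈ ℛ₊ \ S_ε`. -/
theorem statement_8 (π : K) (𝒯 : Set K) (q : ℕ) (hK : LocalFieldData π 𝒯 q)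
    (f : K → K) (hf : ContinuousOn f (Rint K)) :
    (IsCn f 1 ∧ ∀ a ∈ Rint K, HasDerivWithinAt f 0 (Rint K) a) ↔
      ∀ ε : ℝ, 0 < ε → ∃ S : Finset K, ↑S ⊆ RPlus π 𝒯 ∧
        ∀ r ∈ RPlus π 𝒯, r ∉ S → ‖b0 π 𝒯 f r * (gamma π 𝒯 r)⁻¹‖ < ε := by
  constructor
  · rintro ⟨hC, hD⟩
    exact forward_dir π 𝒯 hK hC hD
  · intro H
    exact reverse_dir π 𝒯 hK hf H

end DSW
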